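/- Given a finite data set D = {(x_i, y_i)}_{i=1}^N with all x_i nonzero, let ρ̂(D,P) = max_i ‖y_i‖_P / ‖x_i‖_P for P positive definite, where ‖z‖_P = sqrt(z^T P z). If P⋆ is positive definite and γ⋆ = ρ̂(D, P⋆), then ρ̂(D, I) ≤ γ⋆ · κ(P⋆), where κ(P) = sqrt(det(P)/λ_min(P)^n). -/

import Mathlib

open Matrix

lemma quad_decomp {n : ℕ} {A : Matrix (Fin n) (Fin n) ℝ} (hA : A.IsHermitian) (v : Fin n → ℝ) :
    ∃ w : Fin n → ℝ, v ⬝ᵥ A *ᵥ v = ∑ i, hA.eigenvalues i * (w i)^2 ∧ v ⬝ᵥ v = ∑ i, (w i)^2 := by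
  set U : Matrix (Fin n) (Fin n) ℝ := (hA.eigenvectorUnitary : Matrix (Fin n) (Fin n) ℝ) with hU
  have hUU : U * star U = 1 := (Matrix.mem_unitaryGroup_iff).mp hA.eigenvectorUnitary.2
  have hstar : star U *ᵥ v = v ᵥ* U := by
    rw [Matrix.star_eq_conjTranspose, conjTranspose_eq_transpose_of_trivial, mulVec_transpose]
  set w := v ᵥ* U with hw
  have h2 : w ⬝ᵥ w = v ⬝ᵥ (U * star U) *ᵥ v := by
    rw [hw, ← Matrix.dotProduct_mulVec, ← Matrix.mulVec_mulVec, hstar]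
  rw [hUU, Matrix.one_mulVec] at h2
  refine ⟨w, ?_, ?_⟩
  · conv_lhs => rw [hA.spectral_theorem, Unitary.conjStarAlgAut_apply]
    rw [mul_assoc, ← Matrix.mulVec_mulVec, Matrix.dotProduct_mulVec, ← hU,
      ← Matrix.mulVec_mulVec, hstar, ← hw, dotProduct, Fintype.sum_congr]
    intro i
    rw [Matrix.mulVec_diagonal]
    simp
    ring
  · rw [← h2]
    simp [dotProduct, sq]

noncomputable def lamMin {n : ℕ} (X : Matrix (Fin n) (Fin n) ℝ) : ℝ :=
  sInf {t : ℝ | ∃ v : Fin n → ℝ, v ≠ 0 ∧ X.mulVec v = t • v}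

noncomputable def kappa {n : ℕ} (P : Matrix (Fin n) (Fin n) ℝ) : ℝ :=
  Real.sqrt (P.det / (lamMin P) ^ n)

noncomputable def normP {n : ℕ} (P : Matrix (Fin n) (Fin n) ℝ) (z : Fin n → ℝ) : ℝ :=
  Real.sqrt (z ⬝ᵥ P.mulVec z)

lemma spec_bounds {n : ℕ} (hn : n ≠ 0) {A : Matrix (Fin n) (Fin n) ℝ} (hA : A.PosDef) :
    ∃ lm lM : ℝ, 0 < lm ∧ lm ≤ lM ∧ lamMin A = lm ∧ lM * lm ^ (n-1) ≤ A.det ∧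
      (∀ v : Fin n → ℝ, lm * (v ⬝ᵥ v) ≤ v ⬝ᵥ A *ᵥ v) ∧
      (∀ v : Fin n → ℝ, v ⬝ᵥ A *ᵥ v ≤ lM * (v ⬝ᵥ v)) := by
  have hH := hA.1
  have hne : (Finset.univ : Finset (Fin n)).Nonempty := by
    simpa [Finset.univ_nonempty_iff] using Fin.pos_iff_nonempty.mp (Nat.pos_of_ne_zero hn)
  obtain ⟨jm, -, hjm⟩ := Finset.exists_min_image Finset.univ hH.eigenvalues hne
  obtain ⟨jM, -, hjM⟩ := Finset.exists_max_image Finset.univ hH.eigenvalues hne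
  simp only [Finset.mem_univ, forall_true_left, true_implies] at hjm hjM
  set lm := hH.eigenvalues jm
  set lM := hH.eigenvalues jM
  have hlm : 0 < lm := hA.eigenvalues_pos jm
  have lower : ∀ v : Fin n → ℝ, lm * (v ⬝ᵥ v) ≤ v ⬝ᵥ A *ᵥ v := by
    intro v
    obtain ⟨w, hq, hs⟩ := quad_decomp hH v
    rw [hq, hs, Finset.mul_sum]
    exact Finset.sum_le_sum fun i _ =>
      mul_le_mul_of_nonneg_right (hjm i) (sq_nonneg _)
  have upper : ∀ v : Fin n → ℝ, v ⬝ᵥ A *ᵥ v ≤ lM * (v ⬝ᵥ v) := by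
    intro v
    obtain ⟨w, hq, hs⟩ := quad_decomp hH v
    rw [hq, hs, Finset.mul_sum]
    exact Finset.sum_le_sum fun i _ =>
      mul_le_mul_of_nonneg_right (hjM i) (sq_nonneg _)
  refine ⟨lm, lM, hlm, hjM jm, ?_, ?_, lower, upper⟩
  · -- lamMin A = lm
    have hSlb : ∀ t ∈ {t : ℝ | ∃ v : Fin n → ℝ, v ≠ 0 ∧ A.mulVec v = t • v}, lm ≤ t := by
      rintro t ⟨v, hv0, hv⟩
      have hvv : 0 < v ⬝ᵥ v := by
        have hnn : 0 ≤ v ⬝ᵥ v := Finset.sum_nonneg fun i _ => mul_self_nonneg _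
        rcases lt_or_eq_of_le hnn with h | h
        · exact h
        · exact absurd (dotProduct_self_eq_zero.mp h.symm) hv0
      have ht : v ⬝ᵥ A *ᵥ v = t * (v ⬝ᵥ v) := by
        rw [hv, dotProduct_smul]; rfl
      have := lower v
      rw [ht] at this
      exact le_of_mul_le_mul_right (by linarith [mul_comm lm (v ⬝ᵥ v), mul_comm t (v ⬝ᵥ v)]) hvv
    have hmem : lm ∈ {t : ℝ | ∃ v : Fin n → ℝ, v ≠ 0 ∧ A.mulVec v = t • v} := by
      refine ⟨⇑(hH.eigenvectorBasis jm), ?_, hH.mulVec_eigenvectorBasis jm⟩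
      have h0 := hH.eigenvectorBasis.orthonormal.ne_zero jm
      intro hc
      apply h0
      ext i
      exact congrFun hc i
    exact le_antisymm (csInf_le ⟨lm, hSlb⟩ hmem) (le_csInf ⟨lm, hmem⟩ hSlb)
  · -- lM * lm ^ (n-1) ≤ A.det
    have hdet : A.det = ∏ i, hH.eigenvalues i := by
      have := hH.det_eq_prod_eigenvalues
      push_cast at this
      exact this
    rw [hdet, ← Finset.mul_prod_erase Finset.univ hH.eigenvalues (Finset.mem_univ jM)]
    refine mul_le_mul_of_nonneg_left ?_ (le_trans hlm.le (hjM jm))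
    calc lm ^ (n-1) = ∏ _i ∈ Finset.univ.erase jM, lm := by
            rw [Finset.prod_const, Finset.card_erase_of_mem (Finset.mem_univ jM),
              Finset.card_univ, Fintype.card_fin]
      _ ≤ ∏ i ∈ Finset.univ.erase jM, hH.eigenvalues i :=
            Finset.prod_le_prod (fun i _ => hlm.le) (fun i _ => hjm i)

theorem stmt2 {n N : ℕ} (x y : Fin (N + 1) → Fin n → ℝ)
    (hx : ∀ i, x i ≠ 0)
    (Pstar : Matrix (Fin n) (Fin n) ℝ) (hP : Pstar.PosDef)
    (γstar : ℝ) (hγ : γstar = ⨆ i, normP Pstar (y i) / normP Pstar (x i)) :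
    (⨆ i, normP 1 (y i) / normP 1 (x i)) ≤ γstar * kappa Pstar := by
  rcases Nat.eq_zero_or_pos n with h0 | hpos
  · exfalso
    apply hx 0
    subst h0
    ext i
    exact i.elim0
  obtain ⟨lm, lM, hlm, hlmM, hlamMin, hdet, lower, upper⟩ :=
    spec_bounds (Nat.pos_iff_ne_zero.mp hpos) hP
  have hlM : 0 < lM := lt_of_lt_of_le hlm hlmM
  have hsm : 0 < Real.sqrt lm := Real.sqrt_pos.mpr hlm
  have hsM : 0 < Real.sqrt lM := Real.sqrt_pos.mpr hlM
  have hγ0 : 0 ≤ γstar := by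
    rw [hγ]
    refine le_trans (div_nonneg (Real.sqrt_nonneg _) (Real.sqrt_nonneg _) :
      (0:ℝ) ≤ normP Pstar (y 0) / normP Pstar (x 0)) ?_
    exact le_ciSup (f := fun j => normP Pstar (y j) / normP Pstar (x j))
      (Set.finite_range _).bddAbove 0
  have hκ : Real.sqrt lM / Real.sqrt lm ≤ kappa Pstar := by
    unfold kappa
    rw [hlamMin, ← Real.sqrt_div hlM.le]
    apply Real.sqrt_le_sqrt
    rw [div_le_div_iff₀ hlm (pow_pos hlm n)]
    have hpow : lm ^ n = lm ^ (n - 1) * lm := by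
      rw [← pow_succ, Nat.sub_add_cancel hpos]
    rw [hpow]
    nlinarith [mul_le_mul_of_nonneg_right hdet hlm.le, pow_pos hlm (n-1)]
  rw [hγ] at *
  apply ciSup_le
  intro i
  have hb : 0 < normP 1 (x i) := by
    rw [normP, Matrix.one_mulVec]
    apply Real.sqrt_pos.mpr
    have hnn : 0 ≤ x i ⬝ᵥ x i := Finset.sum_nonneg fun j _ => mul_self_nonneg _
    rcases lt_or_eq_of_le hnn with h | h
    · exact h
    · exact absurd (dotProduct_self_eq_zero.mp h.symm) (hx i)
  have hd : 0 < normP Pstar (x i) := by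
    apply Real.sqrt_pos.mpr
    have := hP.dotProduct_mulVec_pos (hx i)
    simpa using this
  have ha : 0 ≤ normP 1 (y i) := Real.sqrt_nonneg _
  have hc : 0 ≤ normP Pstar (y i) := Real.sqrt_nonneg _
  have key1 : Real.sqrt lm * normP 1 (y i) ≤ normP Pstar (y i) := by
    rw [normP, normP, Matrix.one_mulVec, ← Real.sqrt_mul hlm.le]
    exact Real.sqrt_le_sqrt (lower (y i))
  have key2 : normP Pstar (x i) ≤ Real.sqrt lM * normP 1 (x i) := by
    rw [normP, normP, Matrix.one_mulVec, ← Real.sqrt_mul hlM.le]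
    exact Real.sqrt_le_sqrt (upper (x i))
  have ratio : normP Pstar (y i) / normP Pstar (x i) ≤
      ⨆ j, normP Pstar (y j) / normP Pstar (x j) :=
    le_ciSup (f := fun j => normP Pstar (y j) / normP Pstar (x j))
      (Set.finite_range _).bddAbove i
  calc normP 1 (y i) / normP 1 (x i)
      ≤ (normP Pstar (y i) / normP Pstar (x i)) * (Real.sqrt lM / Real.sqrt lm) := by
        rw [div_mul_div_comm, div_le_div_iff₀ hb (by positivity)]
        nlinarith [mul_le_mul_of_nonneg_right key1 hd.le, mul_le_mul_of_nonneg_left key2 hc]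
    _ ≤ (⨆ j, normP Pstar (y j) / normP Pstar (x j)) * kappa Pstar :=
        mul_le_mul ratio hκ (by positivity) hγ0
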